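/- Let C ⊂ ℝ^d be a nonempty closed set, let ξ be a unit vector, let x_0 ∈ ℝ^d, and define φ(R) = dist(x_0 + Rξ, C ∩ closure(B_R(x_0))) − R for R such that C ∩ closure(B_R(x_0)) is nonempty. Then φ is nonincreasing on this set of radii. -/
import Mathlib


open MeasureTheory Metric Filter Set
open scoped ENNReal NNReal Topology

noncomputable section

/-- The support of a measure: points all of whose neighborhoods have positive mass. -/
def msupport {E : Type*} [MetricSpace E] [MeasurableSpace E] (ν : Measure E) : Set E :=
  {x | ∀ r > 0, 0 < ν (ball x r)}

open Classical in
/-- The length functional: `min {α ≥ 0 | α • ν ≥ H¹⌊supp ν}` if `supp ν` is connected,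
`+∞` otherwise (with `min ∅ = +∞`). -/
noncomputable def lengthF {E : Type*} [MetricSpace E] [MeasurableSpace E] [BorelSpace E]
    (ν : Measure E) : ℝ≥0∞ :=
  if IsConnected (msupport ν) then
    sInf {α : ℝ≥0∞ | (μH[1] : Measure E).restrict (msupport ν) ≤ α • ν}
  else ⊤

/-- The p-th power of the p-Wasserstein distance, as an infimum over couplings. -/
noncomputable def Wpp {E : Type*} [MetricSpace E] [MeasurableSpace E]
    (p : ℝ) (μ ν : Measure E) : ℝ≥0∞ :=
  ⨅ (γ : Measure (E × E)) (_ : γ.map Prod.fst = μ ∧ γ.map Prod.snd = ν),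
    ∫⁻ z, edist z.1 z.2 ^ p ∂γ

/-- The energy `W_p^p(ρ₀, ν) + Λ L(ν)`. -/
noncomputable def energyF {E : Type*} [MetricSpace E] [MeasurableSpace E] [BorelSpace E]
    (p Λ : ℝ) (ρ₀ ν : Measure E) : ℝ≥0∞ :=
  Wpp p ρ₀ ν + ENNReal.ofReal Λ * lengthF ν

/-- Kuratowski convergence of a sequence of (closed) sets. -/
def KuraTendsto {E : Type*} [MetricSpace E] (C : ℕ → Set E) (L : Set E) : Prop :=
  (∀ u : ℕ → E, (∀ n, u n ∈ C n) → ∀ x : E, MapClusterPt x atTop u → x ∈ L) ∧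
  (∀ x ∈ L, ∃ u : ℕ → E, (∀ n, u n ∈ C n) ∧ Tendsto u atTop (𝓝 x))


/-- for a nonempty closed set `C`, a unit vector `ξ` and `x₀`, the function
`φ(R) = dist(x₀ + R ξ, C ∩ closedBall x₀ R) − R` is nonincreasing on the set of radii for
which `C ∩ closedBall x₀ R` is nonempty. -/
theorem stmt_2 {d : ℕ} (C : Set (EuclideanSpace ℝ (Fin d))) (hC : IsClosed C)
    (hne : C.Nonempty) (ξ x₀ : EuclideanSpace ℝ (Fin d)) (hξ : ‖ξ‖ = 1)
    (R R' : ℝ) (hRR' : R' ≤ R) (h' : (C ∩ closedBall x₀ R').Nonempty) :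
    infDist (x₀ + R • ξ) (C ∩ closedBall x₀ R) - R ≤
      infDist (x₀ + R' • ξ) (C ∩ closedBall x₀ R') - R' := by
  have hsub : C ∩ closedBall x₀ R' ⊆ C ∩ closedBall x₀ R :=
    inter_subset_inter_right C (closedBall_subset_closedBall hRR')
  have h1 : infDist (x₀ + R • ξ) (C ∩ closedBall x₀ R) ≤
      infDist (x₀ + R • ξ) (C ∩ closedBall x₀ R') :=
    infDist_le_infDist_of_subset hsub h'
  have h2 : infDist (x₀ + R • ξ) (C ∩ closedBall x₀ R') ≤
      infDist (x₀ + R' • ξ) (C ∩ closedBall x₀ R') + dist (x₀ + R • ξ) (x₀ + R' • ξ) :=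
    infDist_le_infDist_add_dist
  have hd : dist (x₀ + R • ξ) (x₀ + R' • ξ) = R - R' := by
    rw [dist_eq_norm]
    have : x₀ + R • ξ - (x₀ + R' • ξ) = (R - R') • ξ := by
      module
    rw [this, norm_smul, hξ, mul_one, Real.norm_eq_abs, abs_of_nonneg (by linarith)]
  linarith

end
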